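/- arXiv:1210.7926 — 2 statements merged into one kernel-verified Lean document; each statement's English description precedes it below -/
import Mathlib

section
/- For s = (α, β) ∈ ℚ², M a positive integer, and γ = (a b; c d) ∈ SL₂(ℤ), the function F^{(s)}(ε; τ) := exp(Mπε²/Im(τ)) · e(Mαβ + 2Mαε) · e(Mα²τ) satisfies F^{(s)}(ε/(cτ+d); γτ) = e(−(cM/(cτ+d)) · (z_{sγ}(τ) + ε)²) · F^{(sγ)}(ε; τ), where sγ = (aα + cβ, bα + dβ) and z_{sγ}(τ) = (aα + cβ)τ + (bα + dβ). -/
noncomputable section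

/-- `e(w) := exp(2πiw)`. -/
def ee (w : ℂ) : ℂ := Complex.exp (2 * (Real.pi : ℂ) * Complex.I * w)

/-- The function `F^{(s)}(ε;τ)` for `s = (α,β) ∈ ℚ²` and index `M`. -/
def FF (M : ℕ) (α β : ℚ) (ε τ : ℂ) : ℂ :=
  Complex.exp ((M : ℂ) * (Real.pi : ℂ) * ε ^ 2 / (τ.im : ℂ)) *
    ee ((M : ℂ) * (α : ℂ) * (β : ℂ) + 2 * (M : ℂ) * (α : ℂ) * ε) *
    ee ((M : ℂ) * (α : ℂ) ^ 2 * τ)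

/-- Modular transformation law of `F^{(s)}` under `γ = (a b; c d) ∈ SL₂(ℤ)`:
`F^{(s)}(ε/(cτ+d); γτ) = e(−(cM/(cτ+d))(z_{sγ}(τ)+ε)²) F^{(sγ)}(ε;τ)` where
`sγ = (aα+cβ, bα+dβ)` and `z_{sγ}(τ) = (aα+cβ)τ + (bα+dβ)`. -/
theorem stmt1 (M : ℕ) (hM : 1 ≤ M) (α β : ℚ) (ε τ : ℂ) (hτ : 0 < τ.im)
    (a b c d : ℤ) (hdet : a * d - b * c = 1) :
    FF M α β (ε / ((c : ℂ) * τ + (d : ℂ))) (((a : ℂ) * τ + (b : ℂ)) / ((c : ℂ) * τ + (d : ℂ)))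
      = ee (-(((c : ℂ) * (M : ℂ)) / ((c : ℂ) * τ + (d : ℂ)))
            * (((a * α + c * β : ℚ) : ℂ) * τ + ((b * α + d * β : ℚ) : ℂ) + ε) ^ 2)
        * FF M (a * α + c * β) (b * α + d * β) ε τ := by
  have hq : ((c : ℂ) * τ + (d : ℂ)) ≠ 0 := by
    intro h
    have him : ((c:ℂ) * τ + (d:ℂ)).im = 0 := by rw [h]; simp
    simp [Complex.add_im, Complex.mul_im] at him
    rcases him with h1 | h1
    · subst h1
      simp at h
      have hd : d = 0 := by exact_mod_cast h
      simp [hd] at hdet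
    · exact absurd h1 hτ.ne'
  have ht : (τ.im : ℂ) ≠ 0 := by exact_mod_cast hτ.ne'
  have hd : ((a:ℝ) * d - b * c) = 1 := by exact_mod_cast hdet
  have hdC : ((a:ℂ) * d - b * c) = 1 := by exact_mod_cast hdet
  have him2 : (((a:ℂ)*τ+b)/((c:ℂ)*τ+d)).im = τ.im / Complex.normSq ((c:ℂ)*τ+d) := by
    rw [Complex.div_im, ← sub_div]
    congr 1
    simp [Complex.add_im, Complex.add_re, Complex.mul_im, Complex.mul_re]
    linear_combination τ.im * hd
  have hns : ((Complex.normSq ((c:ℂ)*τ+d) : ℝ) : ℂ)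
      = ((c:ℂ)*τ+d) * ((c:ℂ)*τ+d - 2*(τ.im:ℂ)*(c:ℂ)*Complex.I) := by
    have h1 : (starRingEnd ℂ) ((c:ℂ)*τ+d)
        = ((c:ℂ)*τ+d) - ((2*((c:ℂ)*τ+d).im :ℝ):ℂ)*Complex.I := by
      rw [← Complex.sub_conj]; ring
    rw [← Complex.mul_conj, h1]
    have him : ((c:ℂ)*τ+d).im = c * τ.im := by simp
    rw [him]; push_cast; ring
  unfold FF ee
  rw [him2]
  push_cast [hns]
  rw [← Complex.exp_add, ← Complex.exp_add, ← Complex.exp_add, ← Complex.exp_add,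
    ← Complex.exp_add]
  congr 1
  have e1 : (M:ℂ) * (Real.pi:ℂ) * (ε / ((c:ℂ) * τ + (d:ℂ))) ^ 2 /
      ((τ.im:ℂ) / (((c:ℂ) * τ + (d:ℂ)) * ((c:ℂ) * τ + (d:ℂ) - 2 * (τ.im:ℂ) * (c:ℂ) * Complex.I)))
      = (M:ℂ) * (Real.pi:ℂ) * ε ^ 2 / (τ.im:ℂ)
        - 2 * (Real.pi:ℂ) * Complex.I * (c:ℂ) * (M:ℂ) * ε ^ 2 / ((c:ℂ) * τ + (d:ℂ)) := by
    field_simp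
  rw [e1]
  field_simp
  linear_combination (-(M:ℂ)*((τ.im:ℂ)*2*Complex.I)*(α:ℂ)
      *(2*ε + τ*((α:ℂ)*(a:ℂ) + (c:ℂ)*(β:ℂ)) + ((α:ℂ)*(b:ℂ) + (d:ℂ)*(β:ℂ)))) * hdC
end
end

section
/- Let φ(·;τ) be holomorphic on ℂ satisfying φ(z + λτ + μ;τ) = e(−M(λ²τ + 2λz))φ(z;τ) for all λ, μ ∈ ℤ, with M ∈ ℕ, M ≥ 1. Then φ admits the theta decomposition φ(z;τ) = Σ_{ℓ mod 2M} h_ℓ(τ) θ_{M,ℓ}(z;τ), where h_ℓ(τ) := q^{−ℓ²/(4M)} ∫₀¹ φ(x;τ)e(−ℓx)dx and θ_{M,ℓ}(z;τ) := Σ_{λ ≡ ℓ (2M)} q^{λ²/(4M)} e(λz). -/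
noncomputable section

/-- The summand of `θ_{M,ℓ}(z;τ)`, parametrizing `λ = ℓ + 2Mn`, `n ∈ ℤ`. -/
def thetaTerm (M : ℕ) (ℓ : ℤ) (z τ : ℂ) (n : ℤ) : ℂ :=
  ee (((ℓ + 2 * (M : ℤ) * n : ℤ) : ℂ) ^ 2 * τ / (4 * (M : ℂ)))
    * ee (((ℓ + 2 * (M : ℤ) * n : ℤ) : ℂ) * z)

/-- The level `M` theta function `θ_{M,ℓ}(z;τ) = Σ_{λ ≡ ℓ (2M)} q^{λ²/(4M)} e(λz)`. -/
def theta (M : ℕ) (ℓ : ℤ) (z τ : ℂ) : ℂ := ∑' n : ℤ, thetaTerm M ℓ z τ n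

/-- The Fourier coefficient `h_ℓ(τ) = q^{−ℓ²/(4M)} ∫₀¹ φ(x;τ) e(−ℓx) dx`. -/
def fourierCoeff' (M : ℕ) (φ : ℂ → ℂ) (τ : ℂ) (ℓ : ℤ) : ℂ :=
  ee (-(ℓ : ℂ) ^ 2 * τ / (4 * (M : ℂ))) * ∫ x in (0 : ℝ)..1, φ (x : ℂ) * ee (-(ℓ : ℂ) * (x : ℂ))

open Complex intervalIntegral Set in
lemma ee_add (a b : ℂ) : ee (a + b) = ee a * ee b := by
  rw [ee, ee, ee, ← Complex.exp_add]; ring_nf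

lemma ee_zero : ee 0 = 1 := by rw [ee]; simp

lemma ee_int (n : ℤ) : ee (n : ℂ) = 1 := by
  rw [ee]; rw [← Complex.exp_int_mul_two_pi_mul_I n]; congr 1; ring

open Complex in
lemma ee_norm (w : ℂ) : ‖ee w‖ = Real.exp (-(2 * Real.pi * w.im)) := by
  rw [ee, Complex.norm_exp]
  congr 1
  simp [Complex.mul_re, Complex.mul_im]

/-- The plain Fourier coefficient `∫₀¹ φ(x) e(−kx) dx`. -/
def cc (φ : ℂ → ℂ) (k : ℤ) : ℂ := ∫ x in (0:ℝ)..1, φ x * ee (-(k:ℂ) * x)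

open Complex intervalIntegral Set in
lemma g_per (φ : ℂ → ℂ) (hper : ∀ w, φ (w + 1) = φ w) (k : ℤ) (w : ℂ) :
    φ (w + 1) * ee (-(k:ℂ) * (w + 1)) = φ w * ee (-(k:ℂ) * w) := by
  rw [hper]
  congr 1
  have : -(k:ℂ) * (w + 1) = -(k:ℂ) * w + ((-k : ℤ) : ℂ) := by push_cast; ring
  rw [this, ee_add, ee_int, mul_one]

open Complex intervalIntegral Set in
lemma shift_integral (φ : ℂ → ℂ) (hφ : Differentiable ℂ φ)
    (hper : ∀ w, φ (w + 1) = φ w) (k : ℤ) (a : ℂ) :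
    (∫ t in (0:ℝ)..1, φ (a + t) * ee (-(k:ℂ) * (a + t))) = cc φ k := by
  set g : ℂ → ℂ := fun w => φ w * ee (-(k:ℂ) * w) with hg
  have hgd : Differentiable ℂ g := by
    apply hφ.mul
    apply Complex.differentiable_exp.comp
    exact (differentiable_const _).mul (differentiable_id.const_mul _)
  have hgper : ∀ w, g (w + 1) = g w := fun w => g_per φ hper k w
  have step1 : (∫ t in (0:ℝ)..1, g (a + t)) = ∫ t in (0:ℝ)..1, g (↑t + ↑a.im * I) := by
    have hpR : Function.Periodic (fun s : ℝ => g (↑s + ↑a.im * I)) 1 := by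
      intro s
      show g (↑(s + 1) + ↑a.im * I) = g (↑s + ↑a.im * I)
      have : ((s + 1 : ℝ) : ℂ) + ↑a.im * I = (↑s + ↑a.im * I) + 1 := by push_cast; ring
      rw [this, hgper]
    have h1 : (∫ t in (0:ℝ)..1, g (a + t))
        = ∫ t in (0:ℝ)..1, (fun s : ℝ => g (↑s + ↑a.im * I)) (t + a.re) := by
      apply integral_congr
      intro t _
      show g (a + ↑t) = g (↑(t + a.re) + ↑a.im * I)
      congr 1
      push_cast
      linear_combination -Complex.re_add_im a
    rw [h1, integral_comp_add_right (fun s : ℝ => g (↑s + ↑a.im * I)) a.re]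
    have := hpR.intervalIntegral_add_eq (0 + a.re) 0
    simpa [add_comm] using this
  have step2 : (∫ t in (0:ℝ)..1, g (↑t + ↑a.im * I)) = ∫ t in (0:ℝ)..1, g t := by
    have hrect := Complex.integral_boundary_rect_eq_zero_of_differentiableOn g 0
      (1 + ↑a.im * I) (hgd.differentiableOn)
    simp only [Complex.zero_re, Complex.zero_im, Complex.add_re, Complex.one_re,
      Complex.mul_re, Complex.ofReal_re, Complex.I_re, Complex.ofReal_im, Complex.I_im,
      Complex.add_im, Complex.one_im, Complex.mul_im] at hrect
    norm_num at hrect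
    have hsides : (∫ y in (0:ℝ)..a.im, g (1 + ↑y * I)) = ∫ y in (0:ℝ)..a.im, g (↑y * I) := by
      apply integral_congr
      intro y _
      show g (1 + ↑y * I) = g (↑y * I)
      have : (1 : ℂ) + ↑y * I = ↑y * I + 1 := by ring
      rw [this, hgper]
    rw [hsides] at hrect
    linear_combination -hrect
  rw [step1, step2]
  rfl

open Complex intervalIntegral Set in
lemma per_of_hell (M : ℕ) (τ : ℂ) (φ : ℂ → ℂ)
    (hell : ∀ (lam mu : ℤ) (z : ℂ),
      φ (z + (lam : ℂ) * τ + (mu : ℂ))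
        = ee (-(M : ℂ) * ((lam : ℂ) ^ 2 * τ + 2 * (lam : ℂ) * z)) * φ z) :
    ∀ w, φ (w + 1) = φ w := by
  intro w
  have := hell 0 1 w
  simpa [ee_zero] using this

open Complex intervalIntegral Set in
lemma cc_rec (M : ℕ) (τ : ℂ) (φ : ℂ → ℂ) (hφ : Differentiable ℂ φ)
    (hell : ∀ (lam mu : ℤ) (z : ℂ),
      φ (z + (lam : ℂ) * τ + (mu : ℂ))
        = ee (-(M : ℂ) * ((lam : ℂ) ^ 2 * τ + 2 * (lam : ℂ) * z)) * φ z)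
    (ℓ n : ℤ) :
    cc φ (ℓ + 2 * (M : ℤ) * n) = ee (((ℓ : ℂ) * n + M * n ^ 2) * τ) * cc φ ℓ := by
  have hper := per_of_hell M τ φ hell
  rw [← shift_integral φ hφ hper (ℓ + 2 * (M : ℤ) * n) (-(n : ℂ) * τ), cc,
    ← intervalIntegral.integral_const_mul]
  apply integral_congr
  intro t _
  show φ (-(n:ℂ) * τ + ↑t) * ee (-(((ℓ + 2 * (M:ℤ) * n : ℤ)):ℂ) * (-(n:ℂ) * τ + ↑t))
      = ee (((ℓ : ℂ) * n + M * n ^ 2) * τ) * (φ ↑t * ee (-(ℓ:ℂ) * ↑t))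
  have harg : -(n:ℂ) * τ + ↑t = (t : ℂ) + ((-n : ℤ) : ℂ) * τ + ((0 : ℤ) : ℂ) := by
    push_cast; ring
  rw [harg, hell (-n) 0 t]
  have key : ∀ u a b c d : ℂ, a + b = c + d → ee a * u * ee b = ee c * (u * ee d) := by
    intro u a b c d h
    have h2 : ee a * u * ee b = u * ee (a + b) := by rw [ee_add]; ring
    rw [h2, h, ee_add]
    ring
  apply key
  push_cast
  ring

open Complex intervalIntegral Set in
lemma cc_bound (φ : ℂ → ℂ) (hφ : Differentiable ℂ φ)
    (hper : ∀ w, φ (w + 1) = φ w) (Y : ℝ) (hY : 0 ≤ Y) :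
    ∃ C : ℝ, 0 ≤ C ∧ ∀ k : ℤ, ‖cc φ k‖ ≤ C * Real.exp (-(2 * Real.pi * (|(k:ℝ)| * Y))) := by
  obtain ⟨C, hC⟩ := (isCompact_closedBall (0:ℂ) (1 + Y)).exists_bound_of_continuousOn
    hφ.continuous.continuousOn
  have hC0 : 0 ≤ C := le_trans (norm_nonneg _) (hC 0 (by simp; positivity))
  refine ⟨C, hC0, fun k => ?_⟩
  set s : ℝ := if 0 ≤ k then -Y else Y with hs
  have hsabs : |s| = Y := by
    rw [hs]; split <;> simp [abs_neg, _root_.abs_of_nonneg hY]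
  have hks : -(k:ℝ) * s = |(k:ℝ)| * Y := by
    rw [hs]; rcases le_or_gt 0 k with h | h
    · rw [if_pos h, _root_.abs_of_nonneg (by exact_mod_cast h : (0:ℝ) ≤ (k:ℝ))]; try ring
    · rw [if_neg (not_le.mpr h), _root_.abs_of_neg (by exact_mod_cast h : (k:ℝ) < 0)]; try ring
  rw [← shift_integral φ hφ hper k ((s:ℂ) * I)]
  have := intervalIntegral.norm_integral_le_of_norm_le_const
    (a := (0:ℝ)) (b := 1) (C := C * Real.exp (-(2 * Real.pi * (|(k:ℝ)| * Y))))
    (f := fun t : ℝ => φ ((s:ℂ) * I + t) * ee (-(k:ℂ) * ((s:ℂ) * I + t))) ?_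
  · simpa using this
  · intro x hx
    have hx' : x ∈ Set.Ioc (0:ℝ) 1 := by
      rwa [Set.uIoc_of_le (by norm_num : (0:ℝ) ≤ 1)] at hx
    rw [norm_mul, ee_norm]
    have him : (-(k:ℂ) * ((s:ℂ) * I + x)).im = -(k:ℝ) * s := by
      simp [Complex.mul_im, Complex.add_im, Complex.mul_re]
    rw [him, hks]
    apply mul_le_mul_of_nonneg_right _ (Real.exp_nonneg _)
    apply hC
    simp only [Metric.mem_closedBall, dist_zero_right]
    calc ‖(s:ℂ) * I + x‖ ≤ ‖(s:ℂ) * I‖ + ‖(x:ℂ)‖ := norm_add_le _ _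
      _ ≤ Y + 1 := by
          simp [Complex.norm_real, hsabs, Real.norm_eq_abs]
          rw [_root_.abs_of_nonneg hx'.1.le]
          exact hx'.2
      _ = 1 + Y := by ring

open Complex intervalIntegral Set in
lemma summable_geom_int (C : ℝ) (hC : 0 ≤ C) :
    Summable (fun k : ℤ => C * Real.exp (-(2 * Real.pi)) ^ k.natAbs) := by
  have hr : Real.exp (-(2 * Real.pi)) < 1 := by
    rw [Real.exp_lt_one_iff]
    have := Real.pi_pos
    linarith
  have hr0 : 0 ≤ Real.exp (-(2 * Real.pi)) := Real.exp_nonneg _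
  have h1 : Summable (fun n : ℕ => C * Real.exp (-(2 * Real.pi)) ^ n) :=
    (summable_geometric_of_lt_one hr0 hr).mul_left C
  apply Summable.of_nat_of_neg
  · simpa using h1
  · simpa using h1

open Complex intervalIntegral Set in
lemma fourier_expansion (φ : ℂ → ℂ) (hφ : Differentiable ℂ φ)
    (hper : ∀ w, φ (w + 1) = φ w) (z : ℂ) :
    HasSum (fun k : ℤ => cc φ k * ee ((k : ℂ) * z)) (φ z) := by
  haveI : Fact (0 < (1:ℝ)) := ⟨one_pos⟩
  set y : ℝ := z.im with hy
  set fR : ℝ → ℂ := fun x => φ (x + (y:ℂ) * I) with hfR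
  have perR : Function.Periodic fR 1 := by
    intro x
    show φ (↑(x + 1) + (y:ℂ) * I) = φ (↑x + (y:ℂ) * I)
    have : ((x + 1 : ℝ) : ℂ) + (y:ℂ) * I = (↑x + (y:ℂ) * I) + 1 := by push_cast; ring
    rw [this, hper]
  have contR : Continuous fR :=
    hφ.continuous.comp (by continuity)
  have contF : Continuous (perR.lift) :=
    Continuous.quotient_liftOn' contR _
  set F : C(AddCircle 1, ℂ) := ⟨perR.lift, contF⟩ with hF
  -- the Fourier coefficients of F
  have key : ∀ k : ℤ, fourierCoeff (⇑F) k = ee ((k:ℂ) * ((y:ℂ) * I)) * cc φ k := by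
    intro k
    have h1 : fourierCoeff (⇑F) k
        = ∫ x in (0:ℝ)..1, fR x * ee (-(k:ℂ) * x) := by
      rw [fourierCoeff_eq_intervalIntegral _ k 0]
      simp only [zero_add, one_smul, one_div_one]
      apply integral_congr
      intro x _
      show (fourier (-k)) (↑x : AddCircle (1:ℝ)) • perR.lift ↑x = fR x * ee (-(k:ℂ) * x)
      rw [Function.Periodic.lift_coe, fourier_coe_apply, smul_eq_mul, mul_comm]
      congr 1
      rw [ee]
      congr 1
      push_cast
      ring
    have h2 : cc φ k = ee (-(k:ℂ) * ((y:ℂ) * I)) * ∫ x in (0:ℝ)..1, fR x * ee (-(k:ℂ) * x) := by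
      rw [← shift_integral φ hφ hper k ((y:ℂ) * I), ← intervalIntegral.integral_const_mul]
      apply integral_congr
      intro t _
      show φ ((y:ℂ) * I + ↑t) * ee (-(k:ℂ) * ((y:ℂ) * I + ↑t))
          = ee (-(k:ℂ) * ((y:ℂ) * I)) * (fR t * ee (-(k:ℂ) * ↑t))
      rw [hfR]
      simp only
      rw [show ((y:ℂ) * I + ↑t) = (↑t + (y:ℂ) * I) from by ring, show -(k:ℂ) * (↑t + (y:ℂ) * I)
        = -(k:ℂ) * ((y:ℂ) * I) + -(k:ℂ) * ↑t from by ring, ee_add]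
      ring
    rw [h1, h2, ← mul_assoc, ← ee_add]
    rw [show (k:ℂ) * ((y:ℂ) * I) + -(k:ℂ) * ((y:ℂ) * I) = 0 from by ring, ee_zero, one_mul]
  -- summability
  obtain ⟨C, hC0, hC⟩ := cc_bound φ hφ hper (|y| + 1) (by positivity)
  have hsum : Summable (fourierCoeff (⇑F)) := by
    apply Summable.of_norm_bounded (summable_geom_int C hC0)
    intro k
    rw [key, norm_mul, ee_norm]
    have him : ((k:ℂ) * ((y:ℂ) * I)).im = (k:ℝ) * y := by
      simp [Complex.mul_im]
    rw [him]
    calc Real.exp (-(2 * Real.pi * ((k:ℝ) * y))) * ‖cc φ k‖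
        ≤ Real.exp (2 * Real.pi * (|(k:ℝ)| * |y|))
          * (C * Real.exp (-(2 * Real.pi * (|(k:ℝ)| * (|y| + 1))))) := by
          apply mul_le_mul _ (hC k) (norm_nonneg _) (Real.exp_nonneg _)
          rw [Real.exp_le_exp]
          have h1 : -((k:ℝ) * y) ≤ |(k:ℝ)| * |y| := by
            rw [← abs_mul]
            exact neg_le_abs _
          nlinarith [Real.pi_pos]
      _ = C * Real.exp (-(2 * Real.pi)) ^ k.natAbs := by
          have habs : |(k:ℝ)| = (k.natAbs : ℝ) := by
            rw [Nat.cast_natAbs, Int.cast_abs]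
          rw [habs, ← Real.exp_nat_mul, mul_left_comm, ← Real.exp_add]
          congr 2
          ring
  -- conclude
  have hps := has_pointwise_sum_fourier_series_of_summable hsum ((z.re : ℝ) : AddCircle (1:ℝ))
  have hFz : (⇑F) ((z.re : ℝ) : AddCircle (1:ℝ)) = φ z := by
    show perR.lift ((z.re : ℝ) : AddCircle (1:ℝ)) = φ z
    rw [Function.Periodic.lift_coe]
    show φ (↑z.re + (y:ℂ) * I) = φ z
    rw [hy]
    congr 1
    exact Complex.re_add_im z
  rw [hFz] at hps
  have heq : (fun k : ℤ => fourierCoeff (⇑F) k • (fourier k) ((z.re : ℝ) : AddCircle (1:ℝ)))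
      = fun k : ℤ => cc φ k * ee ((k : ℂ) * z) := by
    funext k
    rw [key, fourier_coe_apply, smul_eq_mul]
    rw [show Complex.exp (2 * ↑Real.pi * I * ↑k * ↑z.re / ((1:ℝ):ℂ)) = ee ((k:ℂ) * z.re) from by
      rw [ee]; congr 1; push_cast; ring]
    rw [show ee ((k:ℂ) * ((y:ℂ) * I)) * cc φ k * ee ((k:ℂ) * (z.re:ℝ))
      = cc φ k * (ee ((k:ℂ) * ((z.re:ℝ):ℂ)) * ee ((k:ℂ) * ((y:ℂ) * I))) from by ring, ← ee_add]
    congr 2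
    rw [hy]
    push_cast
    linear_combination (k:ℂ) * (Complex.re_add_im z)
  rw [heq] at hps
  exact hps

/-- Residues mod m paired with quotients enumerate `ℤ`. -/
def resEquiv (m : ℕ) (hm : 0 < m) : (Fin m) × ℤ ≃ ℤ where
  toFun p := (p.1 : ℤ) + (m : ℤ) * p.2
  invFun k := (⟨(k % (m : ℤ)).toNat, by
      have h0 : ((m : ℤ)) ≠ 0 := by exact_mod_cast hm.ne'
      have h1 := Int.emod_nonneg k h0
      have h2 := Int.emod_lt_of_pos k (by exact_mod_cast hm : (0:ℤ) < (m:ℤ))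
      omega⟩, k / (m : ℤ))
  left_inv := by
    rintro ⟨ℓ, n⟩
    have hm' : (0:ℤ) < (m:ℤ) := by exact_mod_cast hm
    have hℓ : (0:ℤ) ≤ (ℓ:ℤ) := Int.ofNat_nonneg _
    have hℓ2 : ((ℓ:ℕ):ℤ) < (m:ℤ) := by exact_mod_cast ℓ.2
    have h1 : ((ℓ:ℤ) + (m:ℤ) * n) % (m:ℤ) = (ℓ:ℤ) := by
      rw [Int.add_mul_emod_self_left]
      exact Int.emod_eq_of_lt hℓ hℓ2
    have h2 : ((ℓ:ℤ) + (m:ℤ) * n) / (m:ℤ) = n := by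
      rw [Int.add_mul_ediv_left _ _ hm'.ne']
      rw [Int.ediv_eq_zero_of_lt hℓ hℓ2, zero_add]
    ext
    · simp [h1]
    · simp [h2]
  right_inv := by
    intro k
    have hm' : (0:ℤ) < (m:ℤ) := by exact_mod_cast hm
    have h1 := Int.emod_nonneg k hm'.ne'
    simp only
    rw [Int.toNat_of_nonneg h1]
    exact Int.emod_add_mul_ediv k (m:ℤ)

open Complex in
lemma per_ell (M : ℕ) (hM : 1 ≤ M) (τ : ℂ) (φ : ℂ → ℂ) (hφ : Differentiable ℂ φ)
    (hell : ∀ (lam mu : ℤ) (z : ℂ),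
      φ (z + (lam : ℂ) * τ + (mu : ℂ))
        = ee (-(M : ℂ) * ((lam : ℂ) ^ 2 * τ + 2 * (lam : ℂ) * z)) * φ z)
    (z : ℂ) (ℓ : ℤ) :
    fourierCoeff' M φ τ ℓ * theta M ℓ z τ
      = ∑' n : ℤ, cc φ (ℓ + 2 * (M : ℤ) * n) * ee (((ℓ + 2 * (M : ℤ) * n : ℤ) : ℂ) * z) := by
  rw [theta, ← tsum_mul_left]
  apply tsum_congr
  intro n
  rw [thetaTerm, fourierCoeff', cc_rec M τ φ hφ hell ℓ n]
  have hint : (∫ x in (0 : ℝ)..1, φ (x : ℂ) * ee (-(ℓ : ℂ) * (x : ℂ))) = cc φ ℓ := rfl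
  rw [hint]
  have hM0 : (M : ℂ) ≠ 0 := by
    exact_mod_cast Nat.cast_ne_zero.mpr (by omega)
  have hexp : -(ℓ : ℂ) ^ 2 * τ / (4 * (M : ℂ))
      + ((ℓ + 2 * (M : ℤ) * n : ℤ) : ℂ) ^ 2 * τ / (4 * (M : ℂ))
      = ((ℓ : ℂ) * n + (M : ℂ) * (n : ℂ) ^ 2) * τ := by
    push_cast
    field_simp
    ring
  calc ee (-(ℓ : ℂ) ^ 2 * τ / (4 * (M : ℂ))) * cc φ ℓ
        * (ee (((ℓ + 2 * (M : ℤ) * n : ℤ) : ℂ) ^ 2 * τ / (4 * (M : ℂ)))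
          * ee (((ℓ + 2 * (M : ℤ) * n : ℤ) : ℂ) * z))
      = (ee (-(ℓ : ℂ) ^ 2 * τ / (4 * (M : ℂ)))
          * ee (((ℓ + 2 * (M : ℤ) * n : ℤ) : ℂ) ^ 2 * τ / (4 * (M : ℂ)))) * cc φ ℓ
          * ee (((ℓ + 2 * (M : ℤ) * n : ℤ) : ℂ) * z) := by ring
    _ = ee (((ℓ : ℂ) * n + (M : ℂ) * (n : ℂ) ^ 2) * τ) * cc φ ℓ
          * ee (((ℓ + 2 * (M : ℤ) * n : ℤ) : ℂ) * z) := by rw [← ee_add, hexp]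
    _ = _ := by ring

/-- Theta decomposition of a holomorphic function satisfying the index `M` elliptic
transformation law: `φ(z;τ) = Σ_{ℓ mod 2M} h_ℓ(τ) θ_{M,ℓ}(z;τ)`. -/
theorem stmt11 (M : ℕ) (hM : 1 ≤ M) (τ : ℂ) (hτ : 0 < τ.im) (φ : ℂ → ℂ)
    (hφ : Differentiable ℂ φ)
    (hell : ∀ (lam mu : ℤ) (z : ℂ),
      φ (z + (lam : ℂ) * τ + (mu : ℂ))
        = ee (-(M : ℂ) * ((lam : ℂ) ^ 2 * τ + 2 * (lam : ℂ) * z)) * φ z) :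
    ∀ z : ℂ, φ z = ∑ ℓ ∈ Finset.range (2 * M), fourierCoeff' M φ τ ℓ * theta M ℓ z τ := by
  intro z
  have hper := per_of_hell M τ φ hell
  have hs := fourier_expansion φ hφ hper z
  have hm : 0 < 2 * M := by omega
  set e := resEquiv (2 * M) hm with he
  set f : ℤ → ℂ := fun k => cc φ k * ee ((k : ℂ) * z) with hf
  have h2 : HasSum (f ∘ e) (φ z) := (e.hasSum_iff).mpr hs
  have h3 : φ z = ∑' p : Fin (2 * M) × ℤ, f (e p) := h2.tsum_eq.symm
  have hsum2 : Summable (fun p : Fin (2 * M) × ℤ => f (e p)) := h2.summable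
  rw [h3, Summable.tsum_prod' hsum2 hsum2.prod_factor]
  have h4 : ∀ i : Fin (2 * M), ∑' n : ℤ, f (e (i, n))
      = fourierCoeff' M φ τ (i : ℕ) * theta M (i : ℕ) z τ := by
    intro i
    rw [per_ell M hM τ φ hφ hell z (i : ℕ)]
    apply tsum_congr
    intro n
    have harg : ((i : ℕ) : ℤ) + ((2 * M : ℕ) : ℤ) * n = ((i : ℕ) : ℤ) + 2 * (M : ℤ) * n := by
      push_cast; ring
    show f (((i : ℕ) : ℤ) + ((2 * M : ℕ) : ℤ) * n) = _
    rw [harg]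
  calc (∑' i : Fin (2 * M), ∑' n : ℤ, f (e (i, n)))
      = ∑' i : Fin (2 * M), fourierCoeff' M φ τ (i : ℕ) * theta M (i : ℕ) z τ :=
        tsum_congr h4
    _ = ∑ i : Fin (2 * M), fourierCoeff' M φ τ (i : ℕ) * theta M (i : ℕ) z τ := tsum_fintype _
    _ = ∑ ℓ ∈ Finset.range (2 * M), fourierCoeff' M φ τ ℓ * theta M ℓ z τ :=
        Fin.sum_univ_eq_sum_range (fun ℓ : ℕ => fourierCoeff' M φ τ ℓ * theta M ℓ z τ) (2 * M)
end
end
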